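/- Under the splitting matching relation with t <_Λ l ⇒ S and ⊥ ∉ S, if x is a safe splitting variable of t along l (i.e. there is p ∈ S with t|_p = x and l|_p is either a rule variable or a constructor application) and σ is a substitution mapping x to a constructor application c(z₁,…,z_k) with fresh variables, then dist(tσ, l) < dist(t, l). -/

import Mathlib

/-- First-order terms: variables, constants and (binary) application. -/
inductive Tm
  | var (x : ℕ)
  | const (c : ℕ)
  | app (a b : Tm)
deriving DecidableEq

/-- The size of a term. -/
def Tm.size : Tm → ℕ
  | .var _ => 1
  | .const _ => 1
  | .app a b => a.size + b.size + 1

/-- Free variables of a term. -/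
def Tm.fv : Tm → Finset ℕ
  | .var x => {x}
  | .const _ => ∅
  | .app a b => a.fv ∪ b.fv

/-- The subterm at a position (positions are lists of booleans). -/
def subtermAt : Tm → List Bool → Option Tm
  | t, [] => some t
  | .app a _, false :: p => subtermAt a p
  | .app _ b, true :: p => subtermAt b p
  | _, _ => none

/-- |t|_p: the size of the subterm of t at position p (0 at invalid positions). -/
def sizeAt (t : Tm) (p : List Bool) : ℕ := (subtermAt t p).elim 0 Tm.size

/-- The splitting matching relation `t₁ <_p t₂ ⇒ S`, parametrized by the sets
Δ₁, Δ₂ of substitutable variables; `none` plays the role of ⊥. -/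
inductive SM (Δ1 Δ2 : Finset ℕ) : Tm → Tm → List Bool → Finset (Option (List Bool)) → Prop
  | appApp {a a' b b' : Tm} {p S1 S2} :
      SM Δ1 Δ2 a a' (p ++ [false]) S1 → SM Δ1 Δ2 b b' (p ++ [true]) S2 →
      SM Δ1 Δ2 (.app a b) (.app a' b') p (S1 ∪ S2)
  | constEq (c : ℕ) (p : List Bool) : SM Δ1 Δ2 (.const c) (.const c) p ∅
  | constNe {c c' : ℕ} (p : List Bool) : c ≠ c' → SM Δ1 Δ2 (.const c) (.const c') p {none}
  | appConst (a b : Tm) (c : ℕ) (p : List Bool) : SM Δ1 Δ2 (.app a b) (.const c) p {none}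
  | constApp (c : ℕ) (a b : Tm) (p : List Bool) : SM Δ1 Δ2 (.const c) (.app a b) p {none}
  | varSub {x t2 p} : x ∈ Δ1 → (∀ y, t2 = Tm.var y → y ∈ Δ2) →
      SM Δ1 Δ2 (.var x) t2 p {some p}
  | varSubRigid {x y : ℕ} (p : List Bool) : x ∈ Δ1 → y ∉ Δ2 →
      SM Δ1 Δ2 (.var x) (.var y) p {none}
  | varRigidEq {x : ℕ} (p : List Bool) : x ∉ Δ1 → SM Δ1 Δ2 (.var x) (.var x) p ∅
  | varRigidNe {x : ℕ} {t2 : Tm} (p : List Bool) : x ∉ Δ1 → t2 ≠ Tm.var x →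
      SM Δ1 Δ2 (.var x) t2 p {none}
  | rigidVar2 {t1 : Tm} {y : ℕ} (p : List Bool) : (∀ x, t1 ≠ Tm.var x) → y ∈ Δ2 →
      SM Δ1 Δ2 t1 (.var y) p ∅
  | badVar2 {t1 : Tm} {y : ℕ} (p : List Bool) : (∀ x, t1 ≠ Tm.var x) → y ∉ Δ2 →
      SM Δ1 Δ2 t1 (.var y) p {none}

/-- The distance associated with a splitting-matching result S against t₂:
0 if ⊥ ∈ S, otherwise the sum of the sizes |t₂|_p over p ∈ S. -/
def dist (t2 : Tm) (S : Finset (Option (List Bool))) : ℕ :=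
  if none ∈ S then 0 else S.sum (fun q => q.elim 0 (sizeAt t2))

/-- Application of a substitution. -/
def subst (γ : ℕ → Tm) : Tm → Tm
  | .var x => γ x
  | .const c => .const c
  | .app a b => .app (subst γ a) (subst γ b)

/-- The head constant of a term. -/
def headConst : Tm → Option ℕ
  | .var _ => none
  | .const c => some c
  | .app a _ => headConst a

/-- Constructor patterns c(z₁,…,z_k): a constructor from Cs applied to fresh
variables. -/
inductive ConstrPat (Cs fresh : Finset ℕ) : Tm → Prop
  | base {c} : c ∈ Cs → ConstrPat Cs fresh (.const c)
  | step {t y} : ConstrPat Cs fresh t → y ∈ fresh → ConstrPat Cs fresh (.app t (.var y))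

/-! ### Auxiliary development -/

/-- Functional version of the splitting matching relation. -/
def smFun (Δ1 Δ2 : Finset ℕ) : Tm → Tm → List Bool → Finset (Option (List Bool))
  | .var x, t2, p =>
      if x ∈ Δ1 then
        (match t2 with
         | .var y => if y ∈ Δ2 then {some p} else {none}
         | _ => {some p})
      else if t2 = .var x then ∅ else {none}
  | .const c, .const c', _ => if c = c' then (∅ : Finset (Option (List Bool))) else {none}
  | .const _, .var y, _ => if y ∈ Δ2 then (∅ : Finset (Option (List Bool))) else {none}
  | .const _, .app _ _, _ => {none}
  | .app a b, .app a' b', p => smFun Δ1 Δ2 a a' (p ++ [false]) ∪ smFun Δ1 Δ2 b b' (p ++ [true])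
  | .app _ _, .const _, _ => {none}
  | .app _ _, .var y, _ => if y ∈ Δ2 then (∅ : Finset (Option (List Bool))) else {none}

lemma sm_eq {Δ1 Δ2 : Finset ℕ} {t l : Tm} {p : List Bool} {S}
    (h : SM Δ1 Δ2 t l p S) : S = smFun Δ1 Δ2 t l p := by
  induction h with
  | appApp ha hb iha ihb => simp [smFun, iha, ihb]
  | constEq c p => simp [smFun]
  | constNe p h => simp [smFun, h]
  | appConst a b c p => simp [smFun]
  | constApp c a b p => simp [smFun]
  | varSub h1 h2 =>
      rename_i x t2 p
      cases t2 with
      | var y => simp [smFun, h1, h2 y rfl]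
      | const c => simp [smFun, h1]
      | app a b => simp [smFun, h1]
  | varSubRigid p h1 h2 => simp [smFun, h1, h2]
  | varRigidEq p h => simp [smFun, h]
  | varRigidNe p h1 h2 =>
      rename_i x t2
      cases t2 <;> simp_all [smFun]
  | rigidVar2 p h1 h2 =>
      rename_i t1 y
      cases t1 with
      | var z => exact absurd rfl (h1 z)
      | const c => simp [smFun, h2]
      | app a b => simp [smFun, h2]
  | badVar2 p h1 h2 =>
      rename_i t1 y
      cases t1 with
      | var z => exact absurd rfl (h1 z)
      | const c => simp [smFun, h2]
      | app a b => simp [smFun, h2]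

lemma Tm.size_pos (t : Tm) : 1 ≤ t.size := by cases t <;> simp [Tm.size]

lemma none_mem_image {S : Finset (Option (List Bool))} {f : List Bool → List Bool} :
    none ∈ S.image (Option.map f) ↔ none ∈ S := by
  simp [Finset.mem_image, Option.map_eq_none_iff]

lemma smFun_prefix (Δ1 Δ2 : Finset ℕ) :
    ∀ (t l : Tm) (p : List Bool),
      smFun Δ1 Δ2 t l p = (smFun Δ1 Δ2 t l []).image (Option.map (p ++ ·)) := by
  intro t
  induction t with
  | var x => intro l p; cases l <;> simp [smFun] <;> split_ifs <;> simp
  | const c => intro l p; cases l <;> simp [smFun] <;> split_ifs <;> simp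
  | app a b iha ihb =>
      intro l p
      cases l with
      | var y => simp [smFun]; split_ifs <;> simp
      | const c => simp [smFun]
      | app a' b' =>
          simp only [smFun, List.nil_append]
          rw [iha a' (p ++ [false]), ihb b' (p ++ [true]), iha a' [false], ihb b' [true],
            Finset.image_union, Finset.image_image, Finset.image_image]
          congr 1 <;> apply Finset.image_congr <;> intro q _ <;> cases q <;>
            simp [List.append_assoc]

lemma smFun_app (Δ1 Δ2 : Finset ℕ) (a b a' b' : Tm) :
    smFun Δ1 Δ2 (.app a b) (.app a' b') [] =
      (smFun Δ1 Δ2 a a' []).image (Option.map (List.cons false)) ∪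
      (smFun Δ1 Δ2 b b' []).image (Option.map (List.cons true)) := by
  simp only [smFun, List.nil_append]
  rw [smFun_prefix Δ1 Δ2 a a' [false], smFun_prefix Δ1 Δ2 b b' [true]]
  congr 1 <;> apply Finset.image_congr <;> intro q _ <;> cases q <;> simp

lemma subterm_of_mem (Δ1 Δ2 : Finset ℕ) :
    ∀ (t l : Tm) (r : List Bool), some r ∈ smFun Δ1 Δ2 t l [] →
      ∃ u, subtermAt l r = some u := by
  intro t
  induction t with
  | var x =>
      intro l r h
      cases l <;> simp [smFun] at h <;> split_ifs at h <;> simp_all <;>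
        exact ⟨_, rfl⟩
  | const c =>
      intro l r h
      cases l <;> simp [smFun] at h <;> split_ifs at h <;> simp_all
  | app a b iha ihb =>
      intro l r h
      cases l with
      | var y => simp [smFun] at h; split_ifs at h <;> simp_all
      | const c => simp [smFun] at h
      | app a' b' =>
          rw [smFun_app] at h
          rcases Finset.mem_union.mp h with h | h <;>
            obtain ⟨q, hq, heq⟩ := Finset.mem_image.mp h <;> cases q with
          | none => simp at heq
          | some r' =>
              simp at heq
              subst heq
              first
              | exact iha a' r' hq
              | exact ihb b' r' hq

lemma dist_app (a' b' : Tm) (Sa Sb : Finset (Option (List Bool)))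
    (ha : none ∉ Sa) (hb : none ∉ Sb) :
    _root_.dist (.app a' b') ((Sa.image (Option.map (List.cons false))) ∪
        (Sb.image (Option.map (List.cons true)))) = _root_.dist a' Sa + _root_.dist b' Sb := by
  have hdis : Disjoint (Sa.image (Option.map (List.cons false)))
      (Sb.image (Option.map (List.cons true))) := by
    rw [Finset.disjoint_left]
    rintro q h1 h2
    obtain ⟨q1, hq1, rfl⟩ := Finset.mem_image.mp h1
    obtain ⟨q2, hq2, e2⟩ := Finset.mem_image.mp h2
    cases q1 <;> cases q2 <;> simp_all
  unfold _root_.dist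
  rw [if_neg, if_neg ha, if_neg hb]
  · rw [Finset.sum_union hdis, Finset.sum_image, Finset.sum_image]
    · congr 1 <;> apply Finset.sum_congr rfl <;> intro q _ <;> cases q <;>
        simp [sizeAt, subtermAt]
    · intro q1 _ q2 _ h; cases q1 <;> cases q2 <;> simp_all
    · intro q1 _ q2 _ h; cases q1 <;> cases q2 <;> simp_all
  · simp only [Finset.mem_union, none_mem_image]
    push_neg
    exact ⟨ha, hb⟩

lemma distSM_pos (Δ1 Δ2 : Finset ℕ) (t l : Tm) (r : List Bool)
    (h : some r ∈ smFun Δ1 Δ2 t l []) (hb : none ∉ smFun Δ1 Δ2 t l []) :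
    1 ≤ _root_.dist l (smFun Δ1 Δ2 t l []) := by
  obtain ⟨u, hu⟩ := subterm_of_mem Δ1 Δ2 t l r h
  unfold _root_.dist
  rw [if_neg hb]
  have h1 : 1 ≤ sizeAt l r := by simp [sizeAt, hu]; exact u.size_pos
  exact le_trans h1 (Finset.single_le_sum (f := fun q => q.elim 0 (sizeAt l))
    (fun q _ => Nat.zero_le _) h)

lemma dist_single (l : Tm) : _root_.dist l {some []} = l.size := by
  simp [_root_.dist, sizeAt, subtermAt]

lemma smFun_varx {Δ1 Δ2 : Finset ℕ} {x : ℕ} {l : Tm} (hx : x ∈ Δ1)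
    (hb : none ∉ smFun Δ1 Δ2 (.var x) l []) :
    smFun Δ1 Δ2 (.var x) l [] = {some []} := by
  cases l <;> simp only [smFun, if_pos hx] at hb ⊢ <;>
    first
    | rfl
    | (split_ifs at hb ⊢ <;> simp_all)

lemma dist_pat {Δ' Δ2 Cs fresh : Finset ℕ} (hf : fresh ⊆ Δ') {pat : Tm}
    (hpat : ConstrPat Cs fresh pat) : ∀ l : Tm, _root_.dist l (smFun Δ' Δ2 pat l []) < l.size := by
  induction hpat with
  | base hc =>
      intro l
      have hs := l.size_pos
      cases l with
      | var y => simp only [smFun]; split_ifs <;> simp [_root_.dist] <;> omega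
      | const c' => simp only [smFun]; split_ifs <;> simp [_root_.dist] <;> omega
      | app a b => simp [smFun, _root_.dist]; omega
  | step hpt hy ih =>
      rename_i t z
      intro l
      cases l with
      | var y =>
          have hs := (Tm.var y).size_pos
          simp only [smFun]; split_ifs <;> simp [_root_.dist] <;> omega
      | const c =>
          have hs := (Tm.const c).size_pos
          simp [smFun, _root_.dist]; omega
      | app a' b' =>
          rw [smFun_app]
          by_cases hna : none ∈ smFun Δ' Δ2 t a' []
          · have : _root_.dist (.app a' b') ((smFun Δ' Δ2 t a' []).image (Option.map (List.cons false)) ∪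
                (smFun Δ' Δ2 (.var z) b' []).image (Option.map (List.cons true))) = 0 := by
              unfold _root_.dist
              rw [if_pos]
              exact Finset.mem_union_left _ (none_mem_image.mpr hna)
            rw [this]
            have := (Tm.app a' b').size_pos
            omega
          · by_cases hnb : none ∈ smFun Δ' Δ2 (.var z) b' []
            · have : _root_.dist (.app a' b') ((smFun Δ' Δ2 t a' []).image (Option.map (List.cons false)) ∪
                  (smFun Δ' Δ2 (.var z) b' []).image (Option.map (List.cons true))) = 0 := by
                unfold _root_.dist
                rw [if_pos]
                exact Finset.mem_union_right _ (none_mem_image.mpr hnb)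
              rw [this]
              have := (Tm.app a' b').size_pos
              omega
            · rw [dist_app _ _ _ _ hna hnb]
              have h1 : _root_.dist a' (smFun Δ' Δ2 t a' []) < a'.size := ih a'
              have h2 : _root_.dist b' (smFun Δ' Δ2 (.var z) b' []) ≤ b'.size := by
                have hz : z ∈ Δ' := hf hy
                rw [smFun_varx hz hnb, dist_single]
              simp only [Tm.size]
              omega

lemma dist_mono (Δ1 Δ2 Cs fresh : Finset ℕ) (σ : ℕ → Tm) (x : ℕ) (hx1 : x ∈ Δ1)
    (hσx : ConstrPat Cs fresh (σ x)) (hσid : ∀ y, y ≠ x → σ y = Tm.var y) :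
    ∀ (t l : Tm), (∀ y ∈ fresh, y ∉ t.fv) → none ∉ smFun Δ1 Δ2 t l [] →
      _root_.dist l (smFun ((Δ1.erase x) ∪ fresh) Δ2 (subst σ t) l []) ≤
        _root_.dist l (smFun Δ1 Δ2 t l []) := by
  intro t
  induction t with
  | var y =>
      intro l hfr hb
      by_cases hyx : y = x
      · subst hyx
        rw [smFun_varx hx1 hb, dist_single]
        rw [show subst σ (.var y) = σ y from rfl]
        exact le_of_lt (dist_pat Finset.subset_union_right hσx l)
      · rw [show subst σ (.var y) = σ y from rfl, hσid y hyx]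
        have hyf : y ∉ fresh := fun h => hfr y h (by simp [Tm.fv])
        have hmem : y ∈ (Δ1.erase x ∪ fresh) ↔ y ∈ Δ1 := by
          simp [Finset.mem_union, Finset.mem_erase, hyx, hyf]
        have he : smFun (Δ1.erase x ∪ fresh) Δ2 (.var y) l [] = smFun Δ1 Δ2 (.var y) l [] := by
          cases l <;> simp [smFun, hmem]
        rw [he]
  | const c =>
      intro l hfr hb
      have he : smFun (Δ1.erase x ∪ fresh) Δ2 (.const c) l [] = smFun Δ1 Δ2 (.const c) l [] := by
        cases l <;> simp [smFun]
      rw [show subst σ (.const c) = .const c from rfl, he]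
  | app a b iha ihb =>
      intro l hfr hb
      have hfa : ∀ y ∈ fresh, y ∉ a.fv := fun y hy h => hfr y hy (by simp [Tm.fv, h])
      have hfb : ∀ y ∈ fresh, y ∉ b.fv := fun y hy h => hfr y hy (by simp [Tm.fv, h])
      cases l with
      | var y' =>
          have hy2 : y' ∈ Δ2 := by
            by_contra h
            exact hb (by simp [smFun, h])
          simp [smFun, subst, hy2, _root_.dist]
      | const c => exact absurd (by simp [smFun]) hb
      | app a' b' =>
          rw [smFun_app] at hb
          have hba : none ∉ smFun Δ1 Δ2 a a' [] := fun h =>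
            hb (Finset.mem_union_left _ (none_mem_image.mpr h))
          have hbb : none ∉ smFun Δ1 Δ2 b b' [] := fun h =>
            hb (Finset.mem_union_right _ (none_mem_image.mpr h))
          rw [show subst σ (.app a b) = .app (subst σ a) (subst σ b) from rfl]
          rw [smFun_app, smFun_app, dist_app _ _ _ _ hba hbb]
          by_cases hna : none ∈ smFun (Δ1.erase x ∪ fresh) Δ2 (subst σ a) a' []
          · have h0 : _root_.dist (.app a' b')
                ((smFun (Δ1.erase x ∪ fresh) Δ2 (subst σ a) a' []).image (Option.map (List.cons false)) ∪
                 (smFun (Δ1.erase x ∪ fresh) Δ2 (subst σ b) b' []).image (Option.map (List.cons true))) = 0 := by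
              unfold _root_.dist
              rw [if_pos]
              exact Finset.mem_union_left _ (none_mem_image.mpr hna)
            rw [h0]; exact Nat.zero_le _
          · by_cases hnb : none ∈ smFun (Δ1.erase x ∪ fresh) Δ2 (subst σ b) b' []
            · have h0 : _root_.dist (.app a' b')
                  ((smFun (Δ1.erase x ∪ fresh) Δ2 (subst σ a) a' []).image (Option.map (List.cons false)) ∪
                   (smFun (Δ1.erase x ∪ fresh) Δ2 (subst σ b) b' []).image (Option.map (List.cons true))) = 0 := by
                unfold _root_.dist
                rw [if_pos]
                exact Finset.mem_union_right _ (none_mem_image.mpr hnb)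
              rw [h0]; exact Nat.zero_le _
            · rw [dist_app _ _ _ _ hna hnb]
              exact Nat.add_le_add (iha a' hfa hba) (ihb b' hfb hbb)

lemma dist_strict (Δ1 Δ2 Cs fresh : Finset ℕ) (σ : ℕ → Tm) (x : ℕ) (hx1 : x ∈ Δ1)
    (hσx : ConstrPat Cs fresh (σ x)) (hσid : ∀ y, y ≠ x → σ y = Tm.var y) :
    ∀ (t l : Tm) (r : List Bool), (∀ y ∈ fresh, y ∉ t.fv) → none ∉ smFun Δ1 Δ2 t l [] →
      some r ∈ smFun Δ1 Δ2 t l [] → subtermAt t r = some (.var x) →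
      _root_.dist l (smFun ((Δ1.erase x) ∪ fresh) Δ2 (subst σ t) l []) <
        _root_.dist l (smFun Δ1 Δ2 t l []) := by
  intro t
  induction t with
  | var y =>
      intro l r hfr hb hr hxr
      have hyx : y = x := by
        cases r with
        | nil => simp [subtermAt] at hxr; exact hxr
        | cons c r' => simp [subtermAt] at hxr
      subst hyx
      rw [smFun_varx hx1 hb, dist_single, show subst σ (.var y) = σ y from rfl]
      exact dist_pat Finset.subset_union_right hσx l
  | const c =>
      intro l r hfr hb hr hxr
      cases r <;> simp [subtermAt] at hxr
  | app a b iha ihb =>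
      intro l r hfr hb hr hxr
      have hfa : ∀ y ∈ fresh, y ∉ a.fv := fun y hy h => hfr y hy (by simp [Tm.fv, h])
      have hfb : ∀ y ∈ fresh, y ∉ b.fv := fun y hy h => hfr y hy (by simp [Tm.fv, h])
      cases l with
      | var y' => simp [smFun] at hr; split_ifs at hr <;> simp_all
      | const c => exact absurd (by simp [smFun]) hb
      | app a' b' =>
          rw [smFun_app] at hb hr
          have hba : none ∉ smFun Δ1 Δ2 a a' [] := fun h =>
            hb (Finset.mem_union_left _ (none_mem_image.mpr h))
          have hbb : none ∉ smFun Δ1 Δ2 b b' [] := fun h =>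
            hb (Finset.mem_union_right _ (none_mem_image.mpr h))
          rw [show subst σ (.app a b) = .app (subst σ a) (subst σ b) from rfl]
          rw [smFun_app, smFun_app, dist_app _ _ _ _ hba hbb]
          cases r with
          | nil => simp [subtermAt] at hxr
          | cons bit r' =>
              cases bit
              · -- left branch
                have hra : some r' ∈ smFun Δ1 Δ2 a a' [] := by
                  rcases Finset.mem_union.mp hr with h | h <;>
                    obtain ⟨q, hq, heq⟩ := Finset.mem_image.mp h <;>
                      cases q <;> simp_all
                have hxa : subtermAt a r' = some (.var x) := by
                  simpa [subtermAt] using hxr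
                have hpos : 1 ≤ _root_.dist a' (smFun Δ1 Δ2 a a' []) :=
                  distSM_pos Δ1 Δ2 a a' r' hra hba
                by_cases hna : none ∈ smFun (Δ1.erase x ∪ fresh) Δ2 (subst σ a) a' []
                · have h0 : _root_.dist (.app a' b')
                      ((smFun (Δ1.erase x ∪ fresh) Δ2 (subst σ a) a' []).image (Option.map (List.cons false)) ∪
                       (smFun (Δ1.erase x ∪ fresh) Δ2 (subst σ b) b' []).image (Option.map (List.cons true))) = 0 := by
                    unfold _root_.dist
                    rw [if_pos]
                    exact Finset.mem_union_left _ (none_mem_image.mpr hna)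
                  rw [h0]; omega
                · by_cases hnb : none ∈ smFun (Δ1.erase x ∪ fresh) Δ2 (subst σ b) b' []
                  · have h0 : _root_.dist (.app a' b')
                        ((smFun (Δ1.erase x ∪ fresh) Δ2 (subst σ a) a' []).image (Option.map (List.cons false)) ∪
                         (smFun (Δ1.erase x ∪ fresh) Δ2 (subst σ b) b' []).image (Option.map (List.cons true))) = 0 := by
                      unfold _root_.dist
                      rw [if_pos]
                      exact Finset.mem_union_right _ (none_mem_image.mpr hnb)
                    rw [h0]; omega
                  · rw [dist_app _ _ _ _ hna hnb]
                    have h1 := iha a' r' hfa hba hra hxa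
                    have h2 := dist_mono Δ1 Δ2 Cs fresh σ x hx1 hσx hσid b b' hfb hbb
                    omega
              · -- right branch
                have hrb : some r' ∈ smFun Δ1 Δ2 b b' [] := by
                  rcases Finset.mem_union.mp hr with h | h <;>
                    obtain ⟨q, hq, heq⟩ := Finset.mem_image.mp h <;>
                      cases q <;> simp_all
                have hxb : subtermAt b r' = some (.var x) := by
                  simpa [subtermAt] using hxr
                have hpos : 1 ≤ _root_.dist b' (smFun Δ1 Δ2 b b' []) :=
                  distSM_pos Δ1 Δ2 b b' r' hrb hbb
                by_cases hna : none ∈ smFun (Δ1.erase x ∪ fresh) Δ2 (subst σ a) a' []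
                · have h0 : _root_.dist (.app a' b')
                      ((smFun (Δ1.erase x ∪ fresh) Δ2 (subst σ a) a' []).image (Option.map (List.cons false)) ∪
                       (smFun (Δ1.erase x ∪ fresh) Δ2 (subst σ b) b' []).image (Option.map (List.cons true))) = 0 := by
                    unfold _root_.dist
                    rw [if_pos]
                    exact Finset.mem_union_left _ (none_mem_image.mpr hna)
                  rw [h0]; omega
                · by_cases hnb : none ∈ smFun (Δ1.erase x ∪ fresh) Δ2 (subst σ b) b' []
                  · have h0 : _root_.dist (.app a' b')
                        ((smFun (Δ1.erase x ∪ fresh) Δ2 (subst σ a) a' []).image (Option.map (List.cons false)) ∪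
                         (smFun (Δ1.erase x ∪ fresh) Δ2 (subst σ b) b' []).image (Option.map (List.cons true))) = 0 := by
                      unfold _root_.dist
                      rw [if_pos]
                      exact Finset.mem_union_right _ (none_mem_image.mpr hnb)
                    rw [h0]; omega
                  · rw [dist_app _ _ _ _ hna hnb]
                    have h1 := ihb b' r' hfb hbb hrb hxb
                    have h2 := dist_mono Δ1 Δ2 Cs fresh σ x hx1 hσx hσid a a' hfa hba
                    omega

/-- Distance strictly decreases after splitting along a safe splitting
variable x: if t <_Λ l ⇒ S with ⊥ ∉ S, some p ∈ S has t|_p = x and l|_p is a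
rule variable or a constructor application, and σ maps x to a constructor
pattern c(z₁,…,z_k) with fresh variables (identity elsewhere), then
dist(tσ, l) < dist(t, l). -/
theorem dist_after_splitting_decreases
    (Δ1 Δ2 Cs fresh : Finset ℕ) (t l : Tm)
    (S S' : Finset (Option (List Bool)))
    (σ : ℕ → Tm) (x : ℕ) (hx1 : x ∈ Δ1)
    (hS : SM Δ1 Δ2 t l [] S) (hbot : none ∉ S)
    (p : List Bool) (hp : some p ∈ S) (hxt : subtermAt t p = some (Tm.var x))
    (hsafe : (∃ y ∈ Δ2, subtermAt l p = some (Tm.var y)) ∨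
             (∃ u, subtermAt l p = some u ∧ ∃ c ∈ Cs, headConst u = some c))
    (hσx : ConstrPat Cs fresh (σ x))
    (hσid : ∀ y, y ≠ x → σ y = Tm.var y)
    (hfresh : ∀ y ∈ fresh, y ∉ t.fv ∪ l.fv ∪ Δ1 ∪ Δ2)
    (hS' : SM ((Δ1.erase x) ∪ fresh) Δ2 (subst σ t) l [] S') :
    dist l S' < dist l S := by
  rw [sm_eq hS']
  rw [sm_eq hS] at hbot hp ⊢
  exact dist_strict Δ1 Δ2 Cs fresh σ x hx1 hσx hσid t l p
    (fun y hy h => by have := hfresh y hy; simp [Finset.mem_union] at this; exact this.1 h)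
    hbot hp hxt
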